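/- Two nonconstant polynomials f and g over ℂ have a common root if and only if their resultant Res(f, g) equals zero. -/

import Mathlib

open Polynomial

/-- The Sylvester matrix of two polynomials `f, g` over `ℂ`, of size
`(m + n) × (m + n)` where `m = deg f`, `n = deg g`.  The first `n` columns
carry the coefficients of `f` (leading coefficient on the diagonal-top), the
last `m` columns carry the coefficients of `g`. -/
noncomputable def sylvester (f g : Polynomial ℂ) :
    Matrix (Fin (f.natDegree + g.natDegree)) (Fin (f.natDegree + g.natDegree)) ℂ :=
  Matrix.of fun i j =>
    if (j : ℕ) < g.natDegree then
      -- column `j` built from `f`: entry in row `i` is `a_{i-j}` where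
      -- `a_k = f.coeff (m - k)`, i.e. `f.coeff (m + j - i)`, for `j ≤ i ≤ j + m`.
      if (j : ℕ) ≤ (i : ℕ) ∧ (i : ℕ) ≤ (j : ℕ) + f.natDegree then
        f.coeff (f.natDegree + (j : ℕ) - (i : ℕ))
      else 0
    else
      -- column `n + j'` built from `g`: entry in row `i` is `g.coeff (n + j' - i)`
      -- for `j' ≤ i ≤ j' + n`, where `j' = j - n`.
      if (j : ℕ) - g.natDegree ≤ (i : ℕ) ∧
          (i : ℕ) ≤ ((j : ℕ) - g.natDegree) + g.natDegree then
        g.coeff (g.natDegree + ((j : ℕ) - g.natDegree) - (i : ℕ))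
      else 0

/-- The resultant of two polynomials: the determinant of their Sylvester matrix. -/
noncomputable def res (f g : Polynomial ℂ) : ℂ := (_root_.sylvester f g).det

namespace ResAux
variable (f g : Polynomial ℂ)

noncomputable def P (j : Fin (f.natDegree + g.natDegree)) : Polynomial ℂ :=
  if (j : ℕ) < g.natDegree then f * X ^ (g.natDegree - 1 - (j : ℕ))
  else g * X ^ (f.natDegree + g.natDegree - 1 - (j : ℕ))

lemma sylvester_eq (i j : Fin (f.natDegree + g.natDegree)) :
    _root_.sylvester f g i j = (P f g j).coeff (f.natDegree + g.natDegree - 1 - (i : ℕ)) := by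
  set m := f.natDegree
  set n := g.natDegree
  have hi := i.isLt
  have hj := j.isLt
  simp only [_root_.sylvester, P, Matrix.of_apply]
  split_ifs with h1 h2 h3 <;>
    rw [coeff_mul_X_pow'] <;> split_ifs with h4 <;>
    first
      | (congr 1; omega)
      | rfl
      | (rw [coeff_eq_zero_of_natDegree_lt]; omega)
      | (rw [eq_comm, coeff_eq_zero_of_natDegree_lt]; omega)
      | omega

lemma coeff_P_eq_zero (j : Fin (f.natDegree + g.natDegree)) {d : ℕ}
    (hd : f.natDegree + g.natDegree ≤ d) : (P f g j).coeff d = 0 := by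
  have hj := j.isLt
  apply coeff_eq_zero_of_natDegree_lt
  unfold P
  split_ifs with h <;>
  · apply lt_of_le_of_lt natDegree_mul_le
    rw [natDegree_X_pow]
    omega

noncomputable def Apol (v : Fin (f.natDegree + g.natDegree) → ℂ) : Polynomial ℂ :=
  ∑ j : Fin (f.natDegree + g.natDegree),
    if (j : ℕ) < g.natDegree then C (v j) * X ^ (g.natDegree - 1 - (j : ℕ)) else 0

noncomputable def Bpol (v : Fin (f.natDegree + g.natDegree) → ℂ) : Polynomial ℂ :=
  ∑ j : Fin (f.natDegree + g.natDegree),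
    if (j : ℕ) < g.natDegree then 0
    else C (v j) * X ^ (f.natDegree + g.natDegree - 1 - (j : ℕ))

lemma sum_vP (v : Fin (f.natDegree + g.natDegree) → ℂ) :
    ∑ j, v j • P f g j = Apol f g v * f + Bpol f g v * g := by
  unfold Apol Bpol P
  rw [Finset.sum_mul, Finset.sum_mul, ← Finset.sum_add_distrib]
  refine Finset.sum_congr rfl fun j _ => ?_
  split_ifs with h <;> simp [smul_eq_C_mul] <;> ring

lemma coeff_Apol (v : Fin (f.natDegree + g.natDegree) → ℂ)
    (j : Fin (f.natDegree + g.natDegree)) (hj : (j : ℕ) < g.natDegree) :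
    (Apol f g v).coeff (g.natDegree - 1 - (j : ℕ)) = v j := by
  unfold Apol
  rw [finset_sum_coeff, Finset.sum_eq_single j]
  · simp [hj, coeff_X_pow]
  · intro j' _ hne
    have hne' : (j' : ℕ) ≠ (j : ℕ) := fun h => hne (Fin.ext h)
    split_ifs with h
    · simp only [coeff_C_mul, coeff_X_pow]
      rw [if_neg (by omega), mul_zero]
    · simp
  · simp

lemma coeff_Bpol (v : Fin (f.natDegree + g.natDegree) → ℂ)
    (j : Fin (f.natDegree + g.natDegree)) (hj : g.natDegree ≤ (j : ℕ)) :
    (Bpol f g v).coeff (f.natDegree + g.natDegree - 1 - (j : ℕ)) = v j := by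
  have hjlt := j.isLt
  unfold Bpol
  rw [finset_sum_coeff, Finset.sum_eq_single j]
  · simp [Nat.not_lt.2 hj, coeff_X_pow]
  · intro j' _ hne
    have hjlt' := j'.isLt
    have hne' : (j' : ℕ) ≠ (j : ℕ) := fun h => hne (Fin.ext h)
    split_ifs with h
    · simp
    · simp only [coeff_C_mul, coeff_X_pow]
      rw [if_neg (by omega), mul_zero]
  · simp

lemma Apol_degree (v : Fin (f.natDegree + g.natDegree) → ℂ) :
    (Apol f g v).degree < (g.natDegree : ℕ) := by
  rw [degree_lt_iff_coeff_zero]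
  intro d hd
  unfold Apol
  rw [finset_sum_coeff]
  refine Finset.sum_eq_zero fun j _ => ?_
  split_ifs with h
  · simp only [coeff_C_mul, coeff_X_pow]
    rw [if_neg (by omega), mul_zero]
  · simp

lemma Bpol_degree (v : Fin (f.natDegree + g.natDegree) → ℂ) :
    (Bpol f g v).degree < (f.natDegree : ℕ) := by
  rw [degree_lt_iff_coeff_zero]
  intro d hd
  unfold Bpol
  rw [finset_sum_coeff]
  refine Finset.sum_eq_zero fun j _ => ?_
  have := j.isLt
  split_ifs with h
  · simp
  · simp only [coeff_C_mul, coeff_X_pow]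
    rw [if_neg (by omega), mul_zero]

noncomputable def vOf (a b : Polynomial ℂ) (j : Fin (f.natDegree + g.natDegree)) : ℂ :=
  if (j : ℕ) < g.natDegree then a.coeff (g.natDegree - 1 - (j : ℕ))
  else b.coeff (f.natDegree + g.natDegree - 1 - (j : ℕ))

lemma Apol_vOf {a : Polynomial ℂ} (ha : a.degree < (g.natDegree : ℕ))
    (b : Polynomial ℂ) : Apol f g (vOf f g a b) = a := by
  set m := f.natDegree; set n := g.natDegree
  ext d
  unfold Apol
  rw [finset_sum_coeff]
  by_cases hd : d < n
  · rw [Finset.sum_eq_single (⟨n - 1 - d, by omega⟩ : Fin (m + n))]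
    · simp only [vOf]
      rw [if_pos (by omega), if_pos (by omega)]
      simp only [coeff_C_mul, coeff_X_pow]
      rw [if_pos (by omega)]
      rw [mul_one]
      congr 1
      omega
    · intro j _ hne
      have hne' : (j : ℕ) ≠ n - 1 - d := fun h => hne (Fin.ext (by simpa using h))
      split_ifs with h
      · simp only [coeff_C_mul, coeff_X_pow]
        rw [if_neg (by omega), mul_zero]
      · simp
    · simp
  · rw [Finset.sum_eq_zero, eq_comm]
    · exact (degree_lt_iff_coeff_zero _ _).1 ha d (by omega)
    · intro j _
      split_ifs with h
      · simp only [coeff_C_mul, coeff_X_pow]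
        rw [if_neg (by omega), mul_zero]
      · simp

lemma Bpol_vOf (a : Polynomial ℂ) {b : Polynomial ℂ}
    (hb : b.degree < (f.natDegree : ℕ)) : Bpol f g (vOf f g a b) = b := by
  set m := f.natDegree; set n := g.natDegree
  ext d
  unfold Bpol
  rw [finset_sum_coeff]
  by_cases hd : d < m
  · rw [Finset.sum_eq_single (⟨m + n - 1 - d, by omega⟩ : Fin (m + n))]
    · simp only [vOf]
      rw [if_neg (by omega), if_neg (by omega)]
      simp only [coeff_C_mul, coeff_X_pow]
      rw [if_pos (by omega)]
      rw [mul_one]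
      congr 1
      omega
    · intro j _ hne
      have hjlt := j.isLt
      have hne' : (j : ℕ) ≠ m + n - 1 - d := fun h => hne (Fin.ext (by simpa using h))
      split_ifs with h
      · simp
      · simp only [coeff_C_mul, coeff_X_pow]
        rw [if_neg (by omega), mul_zero]
    · simp
  · rw [Finset.sum_eq_zero, eq_comm]
    · exact (degree_lt_iff_coeff_zero _ _).1 hb d (by omega)
    · intro j _
      have hjlt := j.isLt
      split_ifs with h
      · simp
      · simp only [coeff_C_mul, coeff_X_pow]
        rw [if_neg (by omega), mul_zero]

lemma mulVec_eq (v : Fin (f.natDegree + g.natDegree) → ℂ)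
    (i : Fin (f.natDegree + g.natDegree)) :
    (_root_.sylvester f g).mulVec v i
      = (Apol f g v * f + Bpol f g v * g).coeff
          (f.natDegree + g.natDegree - 1 - (i : ℕ)) := by
  rw [← sum_vP, finset_sum_coeff]
  simp [Matrix.mulVec, dotProduct, sylvester_eq, coeff_smul, smul_eq_mul, mul_comm]

lemma res_eq_zero_iff (hf : 0 < f.natDegree) (hg : 0 < g.natDegree) :
    res f g = 0 ↔ ∃ a b : Polynomial ℂ, (a ≠ 0 ∨ b ≠ 0) ∧
      a.degree < (g.natDegree : ℕ) ∧ b.degree < (f.natDegree : ℕ) ∧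
      a * f + b * g = 0 := by
  set m := f.natDegree; set n := g.natDegree
  rw [res, ← Matrix.exists_mulVec_eq_zero_iff]
  constructor
  · rintro ⟨v, hv0, hmv⟩
    refine ⟨Apol f g v, Bpol f g v, ?_, Apol_degree f g v, Bpol_degree f g v, ?_⟩
    · obtain ⟨j, hj⟩ := Function.ne_iff.1 hv0
      by_cases h : (j : ℕ) < n
      · left
        intro h0
        apply hj
        rw [← coeff_Apol f g v j h, h0, coeff_zero]
        rfl
      · right
        intro h0
        apply hj
        rw [← coeff_Bpol f g v j (by omega), h0, coeff_zero]
        rfl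
    · ext d
      rw [coeff_zero]
      by_cases hd : d < m + n
      · have hlt : m + n - 1 - d < m + n := by omega
        have := congrFun hmv ⟨m + n - 1 - d, hlt⟩
        rw [mulVec_eq] at this
        have hval : ((⟨m + n - 1 - d, hlt⟩ : Fin (m + n)) : ℕ) = m + n - 1 - d := rfl
        rw [hval] at this
        have hidx : m + n - 1 - (m + n - 1 - d) = d := by omega
        rwa [hidx] at this
      · rw [← sum_vP, finset_sum_coeff]
        refine Finset.sum_eq_zero fun j _ => ?_
        rw [coeff_smul, coeff_P_eq_zero f g j (by omega), smul_zero]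
  · rintro ⟨a, b, hab, ha, hb, heq⟩
    refine ⟨vOf f g a b, ?_, ?_⟩
    · rcases hab with h0 | h0
      · have hk : a.natDegree < n := by
          rwa [← natDegree_lt_iff_degree_lt h0] at ha
        intro hv
        apply leadingCoeff_ne_zero.2 h0
        have := congrFun hv ⟨n - 1 - a.natDegree, by omega⟩
        simp only [vOf, Pi.zero_apply] at this
        rw [if_pos (by omega)] at this
        rw [leadingCoeff, ← this]
        congr 1
        omega
      · have hk : b.natDegree < m := by
          rwa [← natDegree_lt_iff_degree_lt h0] at hb
        intro hv
        apply leadingCoeff_ne_zero.2 h0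
        have := congrFun hv ⟨m + n - 1 - b.natDegree, by omega⟩
        simp only [vOf, Pi.zero_apply] at this
        rw [if_neg (by omega)] at this
        rw [leadingCoeff, ← this]
        congr 1
        omega
    · funext i
      rw [mulVec_eq, Apol_vOf f g ha b, Bpol_vOf f g a hb, heq, coeff_zero, Pi.zero_apply]

end ResAux

/-- Two nonconstant polynomials `f` and `g` over `ℂ` have a common root if and
only if their resultant `Res(f, g)` equals zero. -/
theorem common_root_iff_resultant_eq_zero (f g : Polynomial ℂ)
    (hf : 0 < f.natDegree) (hg : 0 < g.natDegree) :
    (∃ z : ℂ, f.IsRoot z ∧ g.IsRoot z) ↔ res f g = 0 := by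
  have hf0 : f ≠ 0 := fun h => by simp [h] at hf
  have hg0 : g ≠ 0 := fun h => by simp [h] at hg
  rw [ResAux.res_eq_zero_iff f g hf hg]
  constructor
  · rintro ⟨z, hfz, hgz⟩
    obtain ⟨f1, hf1⟩ := (dvd_iff_isRoot.2 hfz : (X - C z) ∣ f)
    obtain ⟨g1, hg1⟩ := (dvd_iff_isRoot.2 hgz : (X - C z) ∣ g)
    have hf10 : f1 ≠ 0 := fun h => hf0 (by rw [hf1, h, mul_zero])
    have hg10 : g1 ≠ 0 := fun h => hg0 (by rw [hg1, h, mul_zero])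
    refine ⟨g1, -f1, Or.inl hg10, ?_, ?_, ?_⟩
    · have : g.degree = 1 + g1.degree := by
        rw [hg1, degree_mul, degree_X_sub_C]
      rw [degree_eq_natDegree hg0] at this
      rw [degree_eq_natDegree hg10]
      rw [degree_eq_natDegree hg10] at this
      have hgd : g.natDegree = 1 + g1.natDegree := by exact_mod_cast this
      exact_mod_cast (by omega : g1.natDegree < g.natDegree)
    · have : f.degree = 1 + f1.degree := by
        rw [hf1, degree_mul, degree_X_sub_C]
      rw [degree_eq_natDegree hf0] at this
      rw [degree_neg, degree_eq_natDegree hf10]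
      rw [degree_eq_natDegree hf10] at this
      have hfd : f.natDegree = 1 + f1.natDegree := by exact_mod_cast this
      exact_mod_cast (by omega : f1.natDegree < f.natDegree)
    · rw [hf1, hg1]; ring
  · rintro ⟨a, b, hab, ha, hb, heq⟩
    -- both a and b are nonzero
    have hb0 : b ≠ 0 := by
      rcases hab with h0 | h0
      · intro hb0
        rw [hb0, zero_mul, add_zero, mul_eq_zero] at heq
        tauto
      · exact h0
    have ha0 : a ≠ 0 := by
      intro ha0
      rw [ha0, zero_mul, zero_add, mul_eq_zero] at heq
      tauto
    by_contra hnoroot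
    push_neg at hnoroot
    -- f and g are coprime
    have hcop : IsCoprime f g := by
      rw [← EuclideanDomain.gcd_isUnit_iff]
      set d := EuclideanDomain.gcd f g with hd
      have hdf : d ∣ f := EuclideanDomain.gcd_dvd_left f g
      have hdg : d ∣ g := EuclideanDomain.gcd_dvd_right f g
      have hd0 : d ≠ 0 := fun h => hf0 (by
        simpa [h] using hdf)
      by_contra hu
      have hddeg : 0 < d.degree := by
        rcases lt_or_ge 0 d.degree with h | h
        · exact h
        · exfalso
          apply hu
          rw [Polynomial.isUnit_iff]
          have hdc : d = C (d.coeff 0) := Polynomial.degree_le_zero_iff.1 h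
          refine ⟨d.coeff 0, ?_, hdc.symm⟩
          exact isUnit_iff_ne_zero.2 (fun h0 => hd0 (by rw [hdc, h0, map_zero]))
      obtain ⟨z, hz⟩ := Complex.exists_root hddeg
      exact hnoroot z (hz.dvd hdf) (hz.dvd hdg)
    -- g ∣ a, contradiction with degree
    have hdvd : g ∣ a * f := ⟨-b, by linear_combination heq⟩
    have hga : g ∣ a := (hcop.symm).dvd_of_dvd_mul_right hdvd
    have := Polynomial.degree_le_of_dvd hga ha0
    rw [degree_eq_natDegree hg0] at this
    exact absurd (lt_of_le_of_lt this ha) (lt_irrefl _)
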